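/- Let n > r ≥ 1 and let 𝐬 ∈ 𝒮_r be a multisegment of total length r. Write ∂(𝐬) = (Q_1,…,Q_n). Then: (i) Q_i(q^{i−1}u) = P_i(u)·Q_{i+1}(q^{i+1}u) for all 1 ≤ i ≤ n−1, so ∂(𝐬) is dominant; (ii) deg Q_i equals the number of segments (a,k) in 𝐬, counted with multiplicity, with k ≥ i; (iii) Σ_{i=1}^n deg Q_i = r. Hence ∂(𝐬) ∈ 𝒬(n)_r. -/

import Mathlib

/-!
Statement 12: for `n > r ≥ 1` and a multisegment `𝐬 ∈ 𝒮_r`, the tuple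
`∂(𝐬) = (Q_1,…,Q_n)` lies in `𝒬(n)_r`.

A multisegment is modelled as a finite multiset of pairs `(a,k) ∈ ℂ × ℕ`
(center `a ≠ 0`, length `k ≥ 1`).
-/

open Polynomial

/-- Substitution `u ↦ c·u` in a polynomial: `(scaleX c Q)(u) = Q(c·u)`. -/
noncomputable def scaleX (c : ℂ) (Q : Polynomial ℂ) : Polynomial ℂ :=
  Q.comp (C c * X)

/-- `P_i(u) = ∏_{(a,k) ∈ 𝐬, k = i} (1 − a·u)` (product with multiplicity). -/
noncomputable def segP (s : Multiset (ℂ × ℕ)) (i : ℕ) : Polynomial ℂ :=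
  ((s.filter (fun p => p.2 = i)).map (fun p => 1 - C p.1 * X)).prod

/-- `Q_i(u) = P_i(q^{1−i}u)·P_{i+1}(q^{2−i}u)⋯P_{n−1}(q^{n−2i}u)` (and `Q_n = 1`):
the `k`-th factor is `P_k(q^{k−2i+1}u)` for `i ≤ k ≤ n−1`. -/
noncomputable def segQ (q : ℂ) (n : ℕ) (s : Multiset (ℂ × ℕ)) (i : ℕ) :
    Polynomial ℂ :=
  ∏ k ∈ Finset.Ico i n, scaleX (q ^ ((k : ℤ) - 2 * (i : ℤ) + 1)) (segP s k)

lemma scaleX_one (Q : Polynomial ℂ) : scaleX 1 Q = Q := by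
  simp [scaleX]

lemma scaleX_scaleX (c d : ℂ) (Q : Polynomial ℂ) :
    scaleX c (scaleX d Q) = scaleX (d * c) Q := by
  unfold scaleX
  rw [Polynomial.comp_assoc]
  congr 1
  simp [mul_comp, C_comp, X_comp, mul_assoc, map_mul]

lemma scaleX_prod (c : ℂ) (t : Finset ℕ) (f : ℕ → Polynomial ℂ) :
    scaleX c (∏ k ∈ t, f k) = ∏ k ∈ t, scaleX c (f k) := by
  unfold scaleX
  induction t using Finset.induction with
  | empty => simp
  | @insert _ _ h ih => simp [Finset.prod_insert h, mul_comp, ih]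

lemma eval0_scaleX (c : ℂ) (Q : Polynomial ℂ) :
    (scaleX c Q).eval 0 = Q.eval 0 := by
  simp [scaleX, eval_comp]

lemma natDegree_scaleX (c : ℂ) (hc : c ≠ 0) (Q : Polynomial ℂ) :
    (scaleX c Q).natDegree = Q.natDegree := by
  rw [scaleX, natDegree_comp, natDegree_C_mul_X c hc, mul_one]

lemma segP_eval0 (s : Multiset (ℂ × ℕ)) (i : ℕ) : (segP s i).eval 0 = 1 := by
  rw [segP, eval_multiset_prod]
  rw [Multiset.map_map]
  apply Multiset.prod_eq_one
  intro x hx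
  simp only [Multiset.mem_map, Function.comp_apply] at hx
  obtain ⟨p, _, rfl⟩ := hx
  simp

lemma segP_ne_zero (s : Multiset (ℂ × ℕ)) (i : ℕ) : segP s i ≠ 0 := by
  intro h
  have := segP_eval0 s i
  rw [h] at this
  simp at this

lemma segP_natDegree (s : Multiset (ℂ × ℕ)) (i : ℕ) (hs : ∀ p ∈ s, p.1 ≠ 0) :
    (segP s i).natDegree = (s.filter (fun p => p.2 = i)).card := by
  rw [segP, Polynomial.natDegree_multiset_prod]
  · rw [Multiset.map_map]
    have h1 : ∀ p ∈ s.filter (fun p : ℂ × ℕ => p.2 = i),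
        (natDegree ∘ fun p : ℂ × ℕ => 1 - C p.1 * X) p = (fun _ => 1) p := by
      intro p hp
      have hp0 : p.1 ≠ 0 := hs p (Multiset.mem_of_mem_filter hp)
      have he : (1 : Polynomial ℂ) - C p.1 * X = C (-p.1) * X + C 1 := by
        simp [map_neg]; ring
      simp only [Function.comp_apply, he]
      exact natDegree_linear (neg_ne_zero.mpr hp0)
    rw [Multiset.map_congr rfl h1]
    simp [Multiset.map_const']
  · intro h0
    rw [Multiset.mem_map] at h0
    obtain ⟨p, _, hp⟩ := h0
    have : ((1 : Polynomial ℂ) - C p.1 * X).eval 0 = 1 := by simp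
    rw [hp] at this
    simp at this

lemma count_aux (i n : ℕ) (s : Multiset (ℂ × ℕ)) (h : ∀ p ∈ s, p.2 < n) :
    ∑ k ∈ Finset.Ico i n, (s.filter (fun p => p.2 = k)).card
      = (s.filter (fun p => i ≤ p.2)).card := by
  induction s using Multiset.induction with
  | empty => simp
  | cons a s ih =>
    have ha : a.2 < n := h a (Multiset.mem_cons_self a s)
    have ih' := ih (fun p hp => h p (Multiset.mem_cons_of_mem hp))
    simp only [Multiset.filter_cons]
    by_cases hia : i ≤ a.2
    · have : ∀ k ∈ Finset.Ico i n,
          ((if a.2 = k then {a} else 0) + Multiset.filter (fun p => p.2 = k) s).card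
          = (if a.2 = k then 1 else 0) + (Multiset.filter (fun p => p.2 = k) s).card := by
        intro k _; split <;> simp <;> omega
      rw [Finset.sum_congr rfl this, Finset.sum_add_distrib, ih']
      rw [Finset.sum_ite_eq (Finset.Ico i n) a.2 (fun _ => 1)]
      have hmem : a.2 ∈ Finset.Ico i n := Finset.mem_Ico.mpr ⟨hia, ha⟩
      rw [if_pos hmem, if_pos hia]
      simp [add_comm]
    · have : ∀ k ∈ Finset.Ico i n,
          ((if a.2 = k then {a} else 0) + Multiset.filter (fun p => p.2 = k) s).card
          = (Multiset.filter (fun p => p.2 = k) s).card := by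
        intro k hk
        have : ¬ a.2 = k := by
          rintro rfl; exact hia (Finset.mem_Ico.mp hk).1
        rw [if_neg this]; simp
      rw [Finset.sum_congr rfl this, ih', if_neg hia]
      simp

lemma count_aux2 (n : ℕ) (s : Multiset (ℂ × ℕ)) (h : ∀ p ∈ s, p.2 ≤ n) :
    ∑ i ∈ Finset.Icc 1 n, (s.filter (fun p => i ≤ p.2)).card
      = (s.map Prod.snd).sum := by
  induction s using Multiset.induction with
  | empty => simp
  | cons a s ih =>
    have ha : a.2 ≤ n := h a (Multiset.mem_cons_self a s)
    have ih' := ih (fun p hp => h p (Multiset.mem_cons_of_mem hp))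
    simp only [Multiset.filter_cons, Multiset.map_cons, Multiset.sum_cons]
    have : ∀ i ∈ Finset.Icc 1 n,
        ((if i ≤ a.2 then {a} else 0) + Multiset.filter (fun p => i ≤ p.2) s).card
        = (if i ≤ a.2 then 1 else 0) + (Multiset.filter (fun p => i ≤ p.2) s).card := by
      intro i _; split <;> simp <;> omega
    rw [Finset.sum_congr rfl this, Finset.sum_add_distrib, ih']
    congr 1
    have hfil : (Finset.Icc 1 n).filter (fun i => i ≤ a.2) = Finset.Icc 1 a.2 := by
      ext x
      simp only [Finset.mem_filter, Finset.mem_Icc]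
      omega
    rw [Finset.sum_boole, hfil]
    simp

theorem stmt12 (q : ℂ) (hq : q ≠ 0) (hru : ∀ m : ℕ, 1 ≤ m → q ^ m ≠ 1)
    (n r : ℕ) (hr : 1 ≤ r) (hnr : r < n)
    (s : Multiset (ℂ × ℕ)) (hs : ∀ p ∈ s, p.1 ≠ 0 ∧ 1 ≤ p.2)
    (hlen : (s.map Prod.snd).sum = r) :
    (∀ i, 1 ≤ i → i ≤ n - 1 →
      scaleX (q ^ (i - 1)) (segQ q n s i)
          = segP s i * scaleX (q ^ (i + 1)) (segQ q n s (i + 1)) ∧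
      scaleX (q ^ (i + 1)) (segQ q n s (i + 1)) ∣
        scaleX (q ^ (i - 1)) (segQ q n s i)) ∧
    (∀ i, 1 ≤ i → i ≤ n →
      (segQ q n s i).natDegree = (s.filter (fun p => i ≤ p.2)).card ∧
      (segQ q n s i).coeff 0 = 1) ∧
    (∑ i ∈ Finset.Icc 1 n, (segQ q n s i).natDegree) = r := by
  have hp2 : ∀ p ∈ s, p.2 ≤ r := by
    intro p hp
    rw [← hlen]
    exact Multiset.single_le_sum (fun x _ => Nat.zero_le x) _
      (Multiset.mem_map_of_mem _ hp)
  have hp2n : ∀ p ∈ s, p.2 < n := fun p hp => lt_of_le_of_lt (hp2 p hp) hnr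
  -- the key identity (i)
  have key : ∀ i, 1 ≤ i → i ≤ n - 1 →
      scaleX (q ^ (i - 1)) (segQ q n s i)
        = segP s i * scaleX (q ^ (i + 1)) (segQ q n s (i + 1)) := by
    intro i hi1 hin
    have hn1 : 1 ≤ n := le_trans hr (le_of_lt hnr)
    have hin' : i < n := by omega
    unfold segQ
    rw [scaleX_prod, scaleX_prod]
    rw [Finset.prod_eq_prod_Ico_succ_bot hin']
    congr 1
    · rw [scaleX_scaleX]
      have hexp : q ^ ((i : ℤ) - 2 * (i : ℤ) + 1) * q ^ (i - 1) = 1 := by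
        rw [← zpow_natCast q (i - 1), ← zpow_add₀ hq]
        have : (i : ℤ) - 2 * (i : ℤ) + 1 + ((i - 1 : ℕ) : ℤ) = 0 := by omega
        rw [this, zpow_zero]
      rw [hexp, scaleX_one]
    · apply Finset.prod_congr rfl
      intro k _
      rw [scaleX_scaleX, scaleX_scaleX]
      congr 1
      rw [← zpow_natCast q (i - 1), ← zpow_natCast q (i + 1),
        ← zpow_add₀ hq, ← zpow_add₀ hq]
      congr 1
      omega
  -- degree of each factor
  have hcne : ∀ (z : ℤ), q ^ z ≠ 0 := fun z => zpow_ne_zero z hq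
  have hfac_deg : ∀ i k : ℕ,
      (scaleX (q ^ ((k : ℤ) - 2 * (i : ℤ) + 1)) (segP s k)).natDegree
        = (s.filter (fun p => p.2 = k)).card := by
    intro i k
    rw [natDegree_scaleX _ (hcne _), segP_natDegree s k (fun p hp => (hs p hp).1)]
  have hfac_ne : ∀ i k : ℕ,
      scaleX (q ^ ((k : ℤ) - 2 * (i : ℤ) + 1)) (segP s k) ≠ 0 := by
    intro i k h0
    have := eval0_scaleX (q ^ ((k : ℤ) - 2 * (i : ℤ) + 1)) (segP s k)
    rw [h0, segP_eval0] at this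
    simp at this
  have deg : ∀ i, (segQ q n s i).natDegree
      = (s.filter (fun p => i ≤ p.2)).card := by
    intro i
    rw [segQ, Polynomial.natDegree_prod _ _ (fun k _ => hfac_ne i k)]
    rw [Finset.sum_congr rfl (fun k _ => hfac_deg i k)]
    exact count_aux i n s hp2n
  have coeff0 : ∀ i, (segQ q n s i).coeff 0 = 1 := by
    intro i
    rw [Polynomial.coeff_zero_eq_eval_zero, segQ, Polynomial.eval_prod]
    apply Finset.prod_eq_one
    intro k _
    rw [eval0_scaleX, segP_eval0]
  refine ⟨fun i hi1 hin => ⟨key i hi1 hin, ?_⟩, fun i _ _ => ⟨deg i, coeff0 i⟩, ?_⟩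
  · rw [key i hi1 hin]
    exact Dvd.intro_left _ rfl
  · rw [Finset.sum_congr rfl (fun i _ => deg i), count_aux2 n s
      (fun p hp => le_of_lt (hp2n p hp)), hlen]
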